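/- (Lemma 2) Let Γ₁ ⊆ Γ₂ be finite convex subsets of ℤ² and let A be any abelian group. Then the restriction homomorphism H_A(Γ₂) → H_A(Γ₁), sending an A-valued harmonic function on Γ₂ to its restriction to Γ₁, is well defined (the restriction of a harmonic function is harmonic) and surjective. -/

import Mathlib

/-- The interior of `Γ ⊆ ℤ²`: points of `Γ` all four of whose lattice neighbors
also lie in `Γ`. -/
def latInterior (Γ : Set (ℤ × ℤ)) : Set (ℤ × ℤ) :=
  {v | v ∈ Γ ∧ (v.1 + 1, v.2) ∈ Γ ∧ (v.1 - 1, v.2) ∈ Γ ∧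
       (v.1, v.2 + 1) ∈ Γ ∧ (v.1, v.2 - 1) ∈ Γ}

/-- An `A`-valued function on `Γ ⊆ ℤ²` is harmonic if the discrete Laplace
equation `4·f(v) = Σ_{w nbr of v} f(w)` holds at every interior point of `Γ`. -/
def IsHarmonicOn {A : Type} [AddCommGroup A] (Γ : Set (ℤ × ℤ)) (f : Γ → A) : Prop :=
  ∀ v, ∀ h : v ∈ latInterior Γ,
    (4 : ℤ) • f ⟨v, h.1⟩ =
      f ⟨(v.1 + 1, v.2), h.2.1⟩ + f ⟨(v.1 - 1, v.2), h.2.2.1⟩ +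
      f ⟨(v.1, v.2 + 1), h.2.2.2.1⟩ + f ⟨(v.1, v.2 - 1), h.2.2.2.2⟩

/-- `Γ ⊆ ℤ²` is convex if it is the set of lattice points of a convex subset of `ℝ²`. -/
def LatticeConvex (Γ : Set (ℤ × ℤ)) : Prop :=
  ∃ C : Set (ℝ × ℝ), Convex ℝ C ∧ Γ = {v : ℤ × ℤ | ((v.1 : ℝ), (v.2 : ℝ)) ∈ C}

noncomputable section
open Classical

/-- Embedding of the lattice into the plane. -/
def emb (v : ℤ × ℤ) : ℝ × ℝ := ((v.1 : ℝ), (v.2 : ℝ))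

lemma emb_inj : Function.Injective emb := by
  intro a b h
  have h1 : (a.1 : ℝ) = b.1 := congrArg Prod.fst h
  have h2 : (a.2 : ℝ) = b.2 := congrArg Prod.snd h
  exact Prod.ext (by exact_mod_cast h1) (by exact_mod_cast h2)

/-- Midpoint property of lattice-convex sets. -/
lemma latticeConvex_mid {Γ : Set (ℤ × ℤ)} (h : LatticeConvex Γ)
    {a b c : ℤ × ℤ} (ha : a ∈ Γ) (hb : b ∈ Γ)
    (h1 : a.1 + b.1 = 2 * c.1) (h2 : a.2 + b.2 = 2 * c.2) : c ∈ Γ := by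
  obtain ⟨C, hC, rfl⟩ := h
  have ha' : emb a ∈ C := ha
  have hb' : emb b ∈ C := hb
  have := hC ha' hb' (a := 1/2) (b := 1/2) (by norm_num) (by norm_num) (by norm_num)
  have he : (1/2 : ℝ) • emb a + (1/2 : ℝ) • emb b = emb c := by
    have e1 : (a.1 : ℝ) + b.1 = 2 * c.1 := by exact_mod_cast h1
    have e2 : (a.2 : ℝ) + b.2 = 2 * c.2 := by exact_mod_cast h2
    simp only [emb, Prod.smul_mk, Prod.mk_add_mk, smul_eq_mul]
    exact Prod.ext (by dsimp; linarith) (by dsimp; linarith)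
  rw [he] at this
  exact this

/-- distance to a nonempty compact convex set is convex. -/
lemma convexOn_infDist {E : Type*} [NormedAddCommGroup E] [NormedSpace ℝ E]
    {K : Set E} (hne : K.Nonempty) (hK : Convex ℝ K) (hcomp : IsCompact K) :
    ConvexOn ℝ Set.univ (fun x => Metric.infDist x K) := by
  refine ⟨convex_univ, ?_⟩
  intro x _ y _ a b ha hb hab
  obtain ⟨p, hp, hpd⟩ := hcomp.exists_infDist_eq_dist hne x
  obtain ⟨q, hq, hqd⟩ := hcomp.exists_infDist_eq_dist hne y
  have hm : a • p + b • q ∈ K := hK hp hq ha hb hab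
  calc Metric.infDist (a • x + b • y) K ≤ dist (a • x + b • y) (a • p + b • q) :=
        Metric.infDist_le_dist_of_mem hm
    _ ≤ a * dist x p + b * dist y q := by
        rw [dist_eq_norm, dist_eq_norm, dist_eq_norm]
        have : a • x + b • y - (a • p + b • q) = a • (x - p) + b • (y - q) := by
          module
        rw [this]
        calc ‖a • (x - p) + b • (y - q)‖ ≤ ‖a • (x - p)‖ + ‖b • (y - q)‖ := norm_add_le _ _
          _ = a * ‖x - p‖ + b * ‖y - q‖ := by
              rw [norm_smul, norm_smul, Real.norm_of_nonneg ha, Real.norm_of_nonneg hb]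
    _ = a * Metric.infDist x K + b * Metric.infDist y K := by rw [hpd, hqd]

/-- If a convex combination attains the max of a bounded function, the support lies
in the argmax set. -/
lemma support_in_argmax {E : Type*} (F : Finset E) (w : E → ℝ) (g : E → ℝ) (c : ℝ)
    (hw0 : ∀ y ∈ F, 0 ≤ w y) (hw1 : ∑ y ∈ F, w y = 1)
    (hg : ∀ y ∈ F, g y ≤ c) (hc : c ≤ ∑ y ∈ F, w y * g y) :
    ∀ y ∈ F, w y ≠ 0 → g y = c := by
  have hsum : ∑ y ∈ F, w y * (c - g y) ≤ 0 := by
    have : ∑ y ∈ F, w y * (c - g y) = c * (∑ y ∈ F, w y) - ∑ y ∈ F, w y * g y := by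
      rw [Finset.mul_sum, ← Finset.sum_sub_distrib]
      congr 1; ext y; ring
    rw [this, hw1, mul_one]
    linarith
  have hterm : ∀ y ∈ F, 0 ≤ w y * (c - g y) := fun y hy =>
    mul_nonneg (hw0 y hy) (by linarith [hg y hy])
  have hall : ∀ y ∈ F, w y * (c - g y) = 0 := by
    intro y hy
    have := Finset.sum_eq_zero_iff_of_nonneg hterm
    have hz : ∑ y ∈ F, w y * (c - g y) = 0 := le_antisymm hsum (Finset.sum_nonneg hterm)
    exact (this.mp hz) y hy
  intro y hy hwy
  have := hall y hy
  rcases mul_eq_zero.mp this with h | h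
  · exact absurd h hwy
  · linarith

lemma exists_removable (Γ₁ Γ₂ : Set (ℤ × ℤ)) (hsub : Γ₁ ⊆ Γ₂) (hfin₂ : Γ₂.Finite)
    (hconv₁ : LatticeConvex Γ₁) (hconv₂ : LatticeConvex Γ₂) (hne : (Γ₂ \ Γ₁).Nonempty) :
    ∃ v ∈ Γ₂ \ Γ₁, LatticeConvex (Γ₂ \ {v}) := by
  obtain ⟨C₁, hC₁, hΓ₁⟩ := hconv₁
  obtain ⟨C₂, hC₂, hΓ₂⟩ := hconv₂
  set K : Set (ℝ × ℝ) := convexHull ℝ (emb '' Γ₁) with hK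
  set d : ℤ × ℤ → ℝ := fun w => if Γ₁.Nonempty then Metric.infDist (emb w) K else 0 with hd
  have hfind : (Γ₂ \ Γ₁).Finite := hfin₂.subset Set.diff_subset
  set t : Finset (ℤ × ℤ) := hfind.toFinset with ht
  have htne : t.Nonempty := by
    obtain ⟨x, hx⟩ := hne
    exact ⟨x, hfind.mem_toFinset.mpr hx⟩
  obtain ⟨v₁, hv₁t, hv₁max⟩ := t.exists_max_image d htne
  set dm : ℝ := d v₁ with hdm
  set t2 : Finset (ℤ × ℤ) := t.filter (fun w => d w = dm) with ht2
  have ht2ne : t2.Nonempty := ⟨v₁, Finset.mem_filter.mpr ⟨hv₁t, rfl⟩⟩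
  obtain ⟨v₂, hv₂t, hv₂max⟩ := t2.exists_max_image (fun w => w.1) ht2ne
  set t3 : Finset (ℤ × ℤ) := t2.filter (fun w => w.1 = v₂.1) with ht3
  have ht3ne : t3.Nonempty := ⟨v₂, Finset.mem_filter.mpr ⟨hv₂t, rfl⟩⟩
  obtain ⟨v, hv₃t, hvmax2⟩ := t3.exists_max_image (fun w => w.2) ht3ne
  have hvt2 : v ∈ t2 := (Finset.mem_filter.mp hv₃t).1
  have hv1 : v.1 = v₂.1 := (Finset.mem_filter.mp hv₃t).2
  have hvt : v ∈ t := (Finset.mem_filter.mp hvt2).1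
  have hdv : d v = dm := (Finset.mem_filter.mp hvt2).2
  have hvmem : v ∈ Γ₂ \ Γ₁ := hfind.mem_toFinset.mp hvt
  -- max properties
  have hmax1 : ∀ u ∈ t2, u.1 ≤ v.1 := fun u hu => hv1 ▸ hv₂max u hu
  have hmax2 : ∀ u ∈ t2, u.1 = v.1 → u.2 ≤ v.2 := by
    intro u hu h1
    exact hvmax2 u (Finset.mem_filter.mpr ⟨hu, h1 ▸ hv1⟩)
  -- embΓ₂ ⊆ C₂
  have hembΓ₂ : emb '' Γ₂ ⊆ C₂ := by
    rintro _ ⟨x, hx, rfl⟩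
    rw [hΓ₂] at hx
    exact hx
  -- the key claim
  have key : emb v ∉ convexHull ℝ (emb '' (Γ₂ \ {v})) := by
    intro hmem
    have hfS : (emb '' (Γ₂ \ {v})).Finite := (hfin₂.subset Set.diff_subset).image emb
    set F : Finset (ℝ × ℝ) := hfS.toFinset with hF
    rw [← hfS.coe_toFinset, ← hF] at hmem
    obtain ⟨w, hw0, hw1, hsumv⟩ := Finset.mem_convexHull'.mp hmem
    -- membership extraction
    have hFmem : ∀ y ∈ F, ∃ u, u ∈ Γ₂ ∧ u ≠ v ∧ emb u = y := by
      intro y hy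
      obtain ⟨u, hu, rfl⟩ := hfS.mem_toFinset.mp hy
      exact ⟨u, hu.1, hu.2, rfl⟩
    set F' : Finset (ℝ × ℝ) := F.filter (fun y => w y ≠ 0) with hF'
    have hF'sub : F' ⊆ F := Finset.filter_subset _ _
    have hw1' : ∑ y ∈ F', w y = 1 := by
      rw [hF', Finset.sum_filter_ne_zero, hw1]
    have hsumv' : ∑ y ∈ F', w y • y = emb v := by
      rw [← hsumv]
      apply Finset.sum_subset hF'sub
      intro y hy hy'
      have : w y = 0 := by
        by_contra h
        exact hy' (Finset.mem_filter.mpr ⟨hy, h⟩)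
      simp [this]
    have hdm0 : 0 ≤ dm := by
      rw [hdm, hd]
      split
      · exact Metric.infDist_nonneg
      · exact le_refl 0
    have hsupp : ∀ y ∈ F', ∃ u, u ∈ t2 ∧ u ≠ v ∧ emb u = y := by

      by_cases hΓne : Γ₁.Nonempty
      · -- Γ₁ nonempty: distance argument
        have hdeq : ∀ u, d u = Metric.infDist (emb u) K := by
          intro u; rw [hd]; simp [hΓne]
        obtain ⟨x₀, hx₀⟩ := hΓne
        have hKne : K.Nonempty := ⟨emb x₀, subset_convexHull ℝ _ ⟨x₀, hx₀, rfl⟩⟩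
        have hKconv : Convex ℝ K := convex_convexHull ℝ _
        have hKcomp : IsCompact K := ((hfin₂.subset hsub).image emb).isCompact_convexHull ℝ
        have hKC₁ : K ⊆ C₁ := by
          apply convexHull_min _ hC₁
          rintro _ ⟨x, hx, rfl⟩
          rw [hΓ₁] at hx; exact hx
        have hdmpos : 0 < dm := by
          rcases hdm0.lt_or_eq with h | h
          · exact h
          · exfalso
            have h0 : Metric.infDist (emb v) K = 0 := by rw [← hdeq v, hdv, ← h]
            have : emb v ∈ K := (hKcomp.isClosed.mem_iff_infDist_zero hKne).mpr h0
            have : v ∈ Γ₁ := by rw [hΓ₁]; exact hKC₁ this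
            exact hvmem.2 this
        have hjen : Metric.infDist (emb v) K ≤ ∑ y ∈ F', w y * Metric.infDist y K := by
          have := (convexOn_infDist hKne hKconv hKcomp).map_sum_le
            (t := F') (w := w) (p := id)
            (fun y hy => hw0 y (hF'sub hy)) hw1' (fun y _ => Set.mem_univ _)
          simpa [hsumv', smul_eq_mul] using this
        have hbound : ∀ y ∈ F', Metric.infDist y K ≤ dm := by
          intro y hy
          obtain ⟨u, hu2, hunev, hemb⟩ := hFmem y (hF'sub hy)
          by_cases hu1 : u ∈ Γ₁
          · have : Metric.infDist y K = 0 :=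
              Metric.infDist_zero_of_mem (subset_convexHull ℝ _ ⟨u, hu1, hemb⟩)
            linarith
          · have hut : u ∈ t := hfind.mem_toFinset.mpr ⟨hu2, hu1⟩
            calc Metric.infDist y K = d u := by rw [hdeq, hemb]
              _ ≤ dm := hv₁max u hut
        have harg := support_in_argmax F' w (fun y => Metric.infDist y K) dm
          (fun y hy => hw0 y (hF'sub hy)) hw1' hbound
          (by calc dm = Metric.infDist (emb v) K := by rw [← hdv, hdeq]
                _ ≤ _ := hjen)
        intro y hy
        obtain ⟨u, hu2, hunev, hemb⟩ := hFmem y (hF'sub hy)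
        have hwy : w y ≠ 0 := (Finset.mem_filter.mp hy).2
        have hdy : Metric.infDist y K = dm := harg y hy hwy
        have hu1 : u ∉ Γ₁ := by
          intro h
          have : Metric.infDist y K = 0 :=
            Metric.infDist_zero_of_mem (subset_convexHull ℝ _ ⟨u, h, hemb⟩)
          rw [this] at hdy; exact absurd hdy.symm (ne_of_gt hdmpos)
        have hut : u ∈ t := hfind.mem_toFinset.mpr ⟨hu2, hu1⟩
        refine ⟨u, Finset.mem_filter.mpr ⟨hut, ?_⟩, hunev, hemb⟩
        rw [hdeq, hemb]; exact hdy
      · -- Γ₁ empty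
        have hdeq : ∀ u, d u = 0 := by intro u; rw [hd]; simp [hΓne]
        intro y hy
        obtain ⟨u, hu2, hunev, hemb⟩ := hFmem y (hF'sub hy)
        have hu1 : u ∉ Γ₁ := by
          intro h; exact hΓne ⟨u, h⟩
        have hut : u ∈ t := hfind.mem_toFinset.mpr ⟨hu2, hu1⟩
        exact ⟨u, Finset.mem_filter.mpr ⟨hut, by rw [hdeq u, hdm, hdeq v₁]⟩, hunev, hemb⟩

    -- stage 2: first coordinates
    have hsum1 : ∑ y ∈ F', w y * y.1 = (v.1 : ℝ) := by
      have : (∑ y ∈ F', w y • y).1 = ∑ y ∈ F', w y * y.1 := by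
        rw [Prod.fst_sum]
        exact Finset.sum_congr rfl (fun y _ => rfl)
      rw [hsumv'] at this; rw [← this]; rfl
    have hb1 : ∀ y ∈ F', y.1 ≤ (v.1 : ℝ) := by
      intro y hy
      obtain ⟨u, hu, _, hemb⟩ := hsupp y hy
      rw [← hemb]
      show ((u.1 : ℝ)) ≤ ((v.1 : ℝ))
      exact_mod_cast hmax1 u hu
    have harg1 := support_in_argmax F' w (fun y => y.1) (v.1 : ℝ)
      (fun y hy => hw0 y (hF'sub hy)) hw1' hb1 (le_of_eq hsum1.symm)
    -- stage 3: second coordinates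
    have hsum2 : ∑ y ∈ F', w y * y.2 = (v.2 : ℝ) := by
      have : (∑ y ∈ F', w y • y).2 = ∑ y ∈ F', w y * y.2 := by
        rw [Prod.snd_sum]
        exact Finset.sum_congr rfl (fun y _ => rfl)
      rw [hsumv'] at this; rw [← this]; rfl
    have hb2 : ∀ y ∈ F', y.2 ≤ (v.2 : ℝ) := by
      intro y hy
      obtain ⟨u, hu, _, hemb⟩ := hsupp y hy
      have hwy : w y ≠ 0 := (Finset.mem_filter.mp hy).2
      have h1 : u.1 = v.1 := by
        have := harg1 y hy hwy
        rw [← hemb] at this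
        simp only [emb] at this
        exact_mod_cast this
      rw [← hemb]
      show ((u.2 : ℝ)) ≤ ((v.2 : ℝ))
      exact_mod_cast hmax2 u hu h1
    have harg2 := support_in_argmax F' w (fun y => y.2) (v.2 : ℝ)
      (fun y hy => hw0 y (hF'sub hy)) hw1' hb2 (le_of_eq hsum2.symm)
    -- conclude
    have hF'ne : F'.Nonempty := by
      by_contra h
      rw [Finset.not_nonempty_iff_eq_empty] at h
      rw [h, Finset.sum_empty] at hw1'
      norm_num at hw1'
    obtain ⟨y, hy⟩ := hF'ne
    obtain ⟨u, hu, hunev, hemb⟩ := hsupp y hy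
    have hwy : w y ≠ 0 := (Finset.mem_filter.mp hy).2
    have h1 : u.1 = v.1 := by
      have := harg1 y hy hwy
      rw [← hemb] at this
      simp only [emb] at this
      exact_mod_cast this
    have h2 : u.2 = v.2 := by
      have := harg2 y hy hwy
      rw [← hemb] at this
      simp only [emb] at this
      exact_mod_cast this
    exact hunev (Prod.ext h1 h2)

  -- conclude lattice convexity
  refine ⟨v, hvmem, convexHull ℝ (emb '' (Γ₂ \ {v})), convex_convexHull ℝ _, ?_⟩
  ext u
  simp only [Set.mem_setOf_eq]
  constructor
  · intro hu
    exact subset_convexHull ℝ _ ⟨u, hu, rfl⟩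
  · intro hu
    have hC : convexHull ℝ (emb '' (Γ₂ \ {v})) ⊆ C₂ :=
      convexHull_min (Set.Subset.trans (Set.image_mono (f := emb) Set.diff_subset) hembΓ₂) hC₂
    have hu2 : u ∈ Γ₂ := by rw [hΓ₂]; exact hC hu
    refine ⟨hu2, ?_⟩
    intro h
    rw [Set.mem_singleton_iff] at h
    subst h
    exact key hu

lemma extend_one {A : Type} [AddCommGroup A] {Γ : Set (ℤ × ℤ)} {v : ℤ × ℤ} (hv : v ∉ Γ)
    (hmid : ∀ a b c : ℤ × ℤ, a ∈ Γ → b ∈ Γ → a.1 + b.1 = 2 * c.1 → a.2 + b.2 = 2 * c.2 → c ∈ Γ)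
    (g : Γ → A) (hg : IsHarmonicOn Γ g) :
    ∃ f : ↥(insert v Γ) → A, IsHarmonicOn (insert v Γ) f ∧
      ∀ x : Γ, f ⟨x.1, Set.mem_insert_of_mem _ x.2⟩ = g x := by
  set Γ' : Set (ℤ × ℤ) := insert v Γ with hΓ'
  have hΓ'mem : ∀ x, x ∈ Γ' → x ≠ v → x ∈ Γ := fun x hx hne =>
    (Set.mem_insert_iff.mp hx).resolve_left hne
  have hne_v : ∀ x, x ∈ Γ → x ≠ v := fun x hx h => hv (h ▸ hx)
  have hvnotint : v ∉ latInterior Γ' := by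
    intro h
    have h1 : (v.1 + 1, v.2) ∈ Γ := hΓ'mem _ h.2.1 (by
      intro hh
      have e1 : v.1 + 1 = v.1 := (Prod.ext_iff.mp hh).1
      omega)
    have h2 : (v.1 - 1, v.2) ∈ Γ := hΓ'mem _ h.2.2.1 (by
      intro hh
      have e1 : v.1 - 1 = v.1 := (Prod.ext_iff.mp hh).1
      omega)
    exact hv (hmid _ _ v h1 h2 (show v.1 + 1 + (v.1 - 1) = 2 * v.1 by ring)
      (show v.2 + v.2 = 2 * v.2 by ring))
  have hnew : ∀ p, p ∈ latInterior Γ' → p ∉ latInterior Γ →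
      p ∈ Γ ∧ ((p.1 + 1, p.2) = v ∨ (p.1 - 1, p.2) = v ∨
        (p.1, p.2 + 1) = v ∨ (p.1, p.2 - 1) = v) := by
    intro p hp hnp
    have hpv : p ≠ v := fun h => hvnotint (h ▸ hp)
    have hpΓ : p ∈ Γ := hΓ'mem _ hp.1 hpv
    refine ⟨hpΓ, ?_⟩
    by_contra hcon
    push_neg at hcon
    obtain ⟨h1, h2, h3, h4⟩ := hcon
    exact hnp ⟨hpΓ, hΓ'mem _ hp.2.1 h1, hΓ'mem _ hp.2.2.1 h2,
      hΓ'mem _ hp.2.2.2.1 h3, hΓ'mem _ hp.2.2.2.2 h4⟩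
  have huniq : ∀ p q, p ∈ latInterior Γ' → p ∉ latInterior Γ →
      q ∈ latInterior Γ' → q ∉ latInterior Γ → p = q := by
    intro p q hp hnp hq hnq
    obtain ⟨hpΓ, hpc⟩ := hnew p hp hnp
    obtain ⟨hqΓ, hqc⟩ := hnew q hq hnq
    rcases hpc with h | h | h | h <;> rcases hqc with h' | h' | h' | h'
    · have hp1 : p.1 + 1 = v.1 := (Prod.ext_iff.mp h).1
      have hp2 : p.2 = v.2 := (Prod.ext_iff.mp h).2
      have hq1 : q.1 + 1 = v.1 := (Prod.ext_iff.mp h').1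
      have hq2 : q.2 = v.2 := (Prod.ext_iff.mp h').2
      exact Prod.ext (by omega) (by omega)
    · have hp1 : p.1 + 1 = v.1 := (Prod.ext_iff.mp h).1
      have hp2 : p.2 = v.2 := (Prod.ext_iff.mp h).2
      have hq1 : q.1 - 1 = v.1 := (Prod.ext_iff.mp h').1
      have hq2 : q.2 = v.2 := (Prod.ext_iff.mp h').2
      exact absurd (hmid p q v hpΓ hqΓ (by omega) (by omega)) hv
    · have hp1 : p.1 + 1 = v.1 := (Prod.ext_iff.mp h).1
      have hp2 : p.2 = v.2 := (Prod.ext_iff.mp h).2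
      have hq1 : q.1 = v.1 := (Prod.ext_iff.mp h').1
      have hq2 : q.2 + 1 = v.2 := (Prod.ext_iff.mp h').2
      have ha : ((p.1, p.2 + 1) : ℤ × ℤ) ∈ Γ := hΓ'mem _ hp.2.2.2.1 (by
        intro hh
        have e1 : p.1 = v.1 := (Prod.ext_iff.mp hh).1
        have e2 : p.2 + 1 = v.2 := (Prod.ext_iff.mp hh).2
        omega)
      have hb : ((q.1 + 1, q.2) : ℤ × ℤ) ∈ Γ := hΓ'mem _ hq.2.1 (by
        intro hh
        have e1 : q.1 + 1 = v.1 := (Prod.ext_iff.mp hh).1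
        have e2 : q.2 = v.2 := (Prod.ext_iff.mp hh).2
        omega)
      exact absurd (hmid _ _ v ha hb (show p.1 + (q.1 + 1) = 2 * v.1 by omega)
        (show p.2 + 1 + (q.2) = 2 * v.2 by omega)) hv
    · have hp1 : p.1 + 1 = v.1 := (Prod.ext_iff.mp h).1
      have hp2 : p.2 = v.2 := (Prod.ext_iff.mp h).2
      have hq1 : q.1 = v.1 := (Prod.ext_iff.mp h').1
      have hq2 : q.2 - 1 = v.2 := (Prod.ext_iff.mp h').2
      have ha : ((p.1, p.2 - 1) : ℤ × ℤ) ∈ Γ := hΓ'mem _ hp.2.2.2.2 (by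
        intro hh
        have e1 : p.1 = v.1 := (Prod.ext_iff.mp hh).1
        have e2 : p.2 - 1 = v.2 := (Prod.ext_iff.mp hh).2
        omega)
      have hb : ((q.1 + 1, q.2) : ℤ × ℤ) ∈ Γ := hΓ'mem _ hq.2.1 (by
        intro hh
        have e1 : q.1 + 1 = v.1 := (Prod.ext_iff.mp hh).1
        have e2 : q.2 = v.2 := (Prod.ext_iff.mp hh).2
        omega)
      exact absurd (hmid _ _ v ha hb (show p.1 + (q.1 + 1) = 2 * v.1 by omega)
        (show p.2 - 1 + (q.2) = 2 * v.2 by omega)) hv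
    · have hp1 : p.1 - 1 = v.1 := (Prod.ext_iff.mp h).1
      have hp2 : p.2 = v.2 := (Prod.ext_iff.mp h).2
      have hq1 : q.1 + 1 = v.1 := (Prod.ext_iff.mp h').1
      have hq2 : q.2 = v.2 := (Prod.ext_iff.mp h').2
      exact absurd (hmid p q v hpΓ hqΓ (by omega) (by omega)) hv
    · have hp1 : p.1 - 1 = v.1 := (Prod.ext_iff.mp h).1
      have hp2 : p.2 = v.2 := (Prod.ext_iff.mp h).2
      have hq1 : q.1 - 1 = v.1 := (Prod.ext_iff.mp h').1
      have hq2 : q.2 = v.2 := (Prod.ext_iff.mp h').2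
      exact Prod.ext (by omega) (by omega)
    · have hp1 : p.1 - 1 = v.1 := (Prod.ext_iff.mp h).1
      have hp2 : p.2 = v.2 := (Prod.ext_iff.mp h).2
      have hq1 : q.1 = v.1 := (Prod.ext_iff.mp h').1
      have hq2 : q.2 + 1 = v.2 := (Prod.ext_iff.mp h').2
      have ha : ((p.1, p.2 + 1) : ℤ × ℤ) ∈ Γ := hΓ'mem _ hp.2.2.2.1 (by
        intro hh
        have e1 : p.1 = v.1 := (Prod.ext_iff.mp hh).1
        have e2 : p.2 + 1 = v.2 := (Prod.ext_iff.mp hh).2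
        omega)
      have hb : ((q.1 - 1, q.2) : ℤ × ℤ) ∈ Γ := hΓ'mem _ hq.2.2.1 (by
        intro hh
        have e1 : q.1 - 1 = v.1 := (Prod.ext_iff.mp hh).1
        have e2 : q.2 = v.2 := (Prod.ext_iff.mp hh).2
        omega)
      exact absurd (hmid _ _ v ha hb (show p.1 + (q.1 - 1) = 2 * v.1 by omega)
        (show p.2 + 1 + (q.2) = 2 * v.2 by omega)) hv
    · have hp1 : p.1 - 1 = v.1 := (Prod.ext_iff.mp h).1
      have hp2 : p.2 = v.2 := (Prod.ext_iff.mp h).2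
      have hq1 : q.1 = v.1 := (Prod.ext_iff.mp h').1
      have hq2 : q.2 - 1 = v.2 := (Prod.ext_iff.mp h').2
      have ha : ((p.1, p.2 - 1) : ℤ × ℤ) ∈ Γ := hΓ'mem _ hp.2.2.2.2 (by
        intro hh
        have e1 : p.1 = v.1 := (Prod.ext_iff.mp hh).1
        have e2 : p.2 - 1 = v.2 := (Prod.ext_iff.mp hh).2
        omega)
      have hb : ((q.1 - 1, q.2) : ℤ × ℤ) ∈ Γ := hΓ'mem _ hq.2.2.1 (by
        intro hh
        have e1 : q.1 - 1 = v.1 := (Prod.ext_iff.mp hh).1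
        have e2 : q.2 = v.2 := (Prod.ext_iff.mp hh).2
        omega)
      exact absurd (hmid _ _ v ha hb (show p.1 + (q.1 - 1) = 2 * v.1 by omega)
        (show p.2 - 1 + (q.2) = 2 * v.2 by omega)) hv
    · have hp1 : p.1 = v.1 := (Prod.ext_iff.mp h).1
      have hp2 : p.2 + 1 = v.2 := (Prod.ext_iff.mp h).2
      have hq1 : q.1 + 1 = v.1 := (Prod.ext_iff.mp h').1
      have hq2 : q.2 = v.2 := (Prod.ext_iff.mp h').2
      have ha : ((p.1 + 1, p.2) : ℤ × ℤ) ∈ Γ := hΓ'mem _ hp.2.1 (by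
        intro hh
        have e1 : p.1 + 1 = v.1 := (Prod.ext_iff.mp hh).1
        have e2 : p.2 = v.2 := (Prod.ext_iff.mp hh).2
        omega)
      have hb : ((q.1, q.2 + 1) : ℤ × ℤ) ∈ Γ := hΓ'mem _ hq.2.2.2.1 (by
        intro hh
        have e1 : q.1 = v.1 := (Prod.ext_iff.mp hh).1
        have e2 : q.2 + 1 = v.2 := (Prod.ext_iff.mp hh).2
        omega)
      exact absurd (hmid _ _ v ha hb (show p.1 + 1 + (q.1) = 2 * v.1 by omega)
        (show p.2 + (q.2 + 1) = 2 * v.2 by omega)) hv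
    · have hp1 : p.1 = v.1 := (Prod.ext_iff.mp h).1
      have hp2 : p.2 + 1 = v.2 := (Prod.ext_iff.mp h).2
      have hq1 : q.1 - 1 = v.1 := (Prod.ext_iff.mp h').1
      have hq2 : q.2 = v.2 := (Prod.ext_iff.mp h').2
      have ha : ((p.1 - 1, p.2) : ℤ × ℤ) ∈ Γ := hΓ'mem _ hp.2.2.1 (by
        intro hh
        have e1 : p.1 - 1 = v.1 := (Prod.ext_iff.mp hh).1
        have e2 : p.2 = v.2 := (Prod.ext_iff.mp hh).2
        omega)
      have hb : ((q.1, q.2 + 1) : ℤ × ℤ) ∈ Γ := hΓ'mem _ hq.2.2.2.1 (by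
        intro hh
        have e1 : q.1 = v.1 := (Prod.ext_iff.mp hh).1
        have e2 : q.2 + 1 = v.2 := (Prod.ext_iff.mp hh).2
        omega)
      exact absurd (hmid _ _ v ha hb (show p.1 - 1 + (q.1) = 2 * v.1 by omega)
        (show p.2 + (q.2 + 1) = 2 * v.2 by omega)) hv
    · have hp1 : p.1 = v.1 := (Prod.ext_iff.mp h).1
      have hp2 : p.2 + 1 = v.2 := (Prod.ext_iff.mp h).2
      have hq1 : q.1 = v.1 := (Prod.ext_iff.mp h').1
      have hq2 : q.2 + 1 = v.2 := (Prod.ext_iff.mp h').2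
      exact Prod.ext (by omega) (by omega)
    · have hp1 : p.1 = v.1 := (Prod.ext_iff.mp h).1
      have hp2 : p.2 + 1 = v.2 := (Prod.ext_iff.mp h).2
      have hq1 : q.1 = v.1 := (Prod.ext_iff.mp h').1
      have hq2 : q.2 - 1 = v.2 := (Prod.ext_iff.mp h').2
      exact absurd (hmid p q v hpΓ hqΓ (by omega) (by omega)) hv
    · have hp1 : p.1 = v.1 := (Prod.ext_iff.mp h).1
      have hp2 : p.2 - 1 = v.2 := (Prod.ext_iff.mp h).2
      have hq1 : q.1 + 1 = v.1 := (Prod.ext_iff.mp h').1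
      have hq2 : q.2 = v.2 := (Prod.ext_iff.mp h').2
      have ha : ((p.1 + 1, p.2) : ℤ × ℤ) ∈ Γ := hΓ'mem _ hp.2.1 (by
        intro hh
        have e1 : p.1 + 1 = v.1 := (Prod.ext_iff.mp hh).1
        have e2 : p.2 = v.2 := (Prod.ext_iff.mp hh).2
        omega)
      have hb : ((q.1, q.2 - 1) : ℤ × ℤ) ∈ Γ := hΓ'mem _ hq.2.2.2.2 (by
        intro hh
        have e1 : q.1 = v.1 := (Prod.ext_iff.mp hh).1
        have e2 : q.2 - 1 = v.2 := (Prod.ext_iff.mp hh).2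
        omega)
      exact absurd (hmid _ _ v ha hb (show p.1 + 1 + (q.1) = 2 * v.1 by omega)
        (show p.2 + (q.2 - 1) = 2 * v.2 by omega)) hv
    · have hp1 : p.1 = v.1 := (Prod.ext_iff.mp h).1
      have hp2 : p.2 - 1 = v.2 := (Prod.ext_iff.mp h).2
      have hq1 : q.1 - 1 = v.1 := (Prod.ext_iff.mp h').1
      have hq2 : q.2 = v.2 := (Prod.ext_iff.mp h').2
      have ha : ((p.1 - 1, p.2) : ℤ × ℤ) ∈ Γ := hΓ'mem _ hp.2.2.1 (by
        intro hh
        have e1 : p.1 - 1 = v.1 := (Prod.ext_iff.mp hh).1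
        have e2 : p.2 = v.2 := (Prod.ext_iff.mp hh).2
        omega)
      have hb : ((q.1, q.2 - 1) : ℤ × ℤ) ∈ Γ := hΓ'mem _ hq.2.2.2.2 (by
        intro hh
        have e1 : q.1 = v.1 := (Prod.ext_iff.mp hh).1
        have e2 : q.2 - 1 = v.2 := (Prod.ext_iff.mp hh).2
        omega)
      exact absurd (hmid _ _ v ha hb (show p.1 - 1 + (q.1) = 2 * v.1 by omega)
        (show p.2 + (q.2 - 1) = 2 * v.2 by omega)) hv
    · have hp1 : p.1 = v.1 := (Prod.ext_iff.mp h).1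
      have hp2 : p.2 - 1 = v.2 := (Prod.ext_iff.mp h).2
      have hq1 : q.1 = v.1 := (Prod.ext_iff.mp h').1
      have hq2 : q.2 + 1 = v.2 := (Prod.ext_iff.mp h').2
      exact absurd (hmid p q v hpΓ hqΓ (by omega) (by omega)) hv
    · have hp1 : p.1 = v.1 := (Prod.ext_iff.mp h).1
      have hp2 : p.2 - 1 = v.2 := (Prod.ext_iff.mp h).2
      have hq1 : q.1 = v.1 := (Prod.ext_iff.mp h').1
      have hq2 : q.2 - 1 = v.2 := (Prod.ext_iff.mp h').2
      exact Prod.ext (by omega) (by omega)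
  -- the extension
  have hg'ex : ∃ g' : ℤ × ℤ → A, ∀ x, g' x = if h : x ∈ Γ then g ⟨x, h⟩ else 0 :=
    ⟨_, fun x => rfl⟩
  obtain ⟨g', hg'⟩ := hg'ex
  have hg'eq : ∀ x (hx : x ∈ Γ), g' x = g ⟨x, hx⟩ := fun x hx => by rw [hg' x, dif_pos hx]
  have hg'v : g' v = 0 := by rw [hg' v, dif_neg hv]
  by_cases hex : ∃ u, u ∈ latInterior Γ' ∧ u ∉ latInterior Γ
  · obtain ⟨u₀, hu₀, hnu₀⟩ := hex
    obtain ⟨hu₀Γ, hu₀c⟩ := hnew u₀ hu₀ hnu₀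
    obtain ⟨c, hc⟩ : ∃ c : A, c = (4 : ℤ) • g' u₀ -
        (g' (u₀.1 + 1, u₀.2) + g' (u₀.1 - 1, u₀.2) +
         g' (u₀.1, u₀.2 + 1) + g' (u₀.1, u₀.2 - 1)) := ⟨_, rfl⟩
    obtain ⟨F, hF⟩ : ∃ F : ℤ × ℤ → A, ∀ x, F x = if x = v then c else g' x :=
      ⟨_, fun x => rfl⟩
    have hFv : F v = c := by rw [hF v, if_pos rfl]
    have hFne : ∀ x, x ≠ v → F x = g' x := fun x hx => by rw [hF x, if_neg hx]
    have hFΓ : ∀ x (hx : x ∈ Γ), F x = g ⟨x, hx⟩ := fun x hx => by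
      rw [hFne x (hne_v x hx), hg'eq x hx]
    refine ⟨fun x => F x.1, ?_, fun x => hFΓ x.1 x.2⟩
    intro p hp
    show (4 : ℤ) • F p = F (p.1 + 1, p.2) + F (p.1 - 1, p.2) +
      F (p.1, p.2 + 1) + F (p.1, p.2 - 1)
    by_cases hpint : p ∈ latInterior Γ
    · rw [hFΓ p hpint.1, hFΓ _ hpint.2.1, hFΓ _ hpint.2.2.1,
        hFΓ _ hpint.2.2.2.1, hFΓ _ hpint.2.2.2.2]
      exact hg p hpint
    · have hpu : u₀ = p := huniq u₀ p hu₀ hnu₀ hp hpint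
      subst hpu
      have hFp : F u₀ = g' u₀ := hFne u₀ (hne_v u₀ hu₀Γ)
      rcases hu₀c with h | h | h | h
      · have hne2 : (u₀.1 - 1, u₀.2) ≠ v := by
          intro hh
          have e1 : u₀.1 - 1 = v.1 := (Prod.ext_iff.mp hh).1
          have f1 : u₀.1 + 1 = v.1 := (Prod.ext_iff.mp h).1
          omega
        have hne3 : (u₀.1, u₀.2 + 1) ≠ v := by
          intro hh
          have e1 : u₀.1 = v.1 := (Prod.ext_iff.mp hh).1
          have f1 : u₀.1 + 1 = v.1 := (Prod.ext_iff.mp h).1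
          omega
        have hne4 : (u₀.1, u₀.2 - 1) ≠ v := by
          intro hh
          have e1 : u₀.1 = v.1 := (Prod.ext_iff.mp hh).1
          have f1 : u₀.1 + 1 = v.1 := (Prod.ext_iff.mp h).1
          omega
        rw [hFp, hFne _ hne2, hFne _ hne3, hFne _ hne4,
          show F (u₀.1 + 1, u₀.2) = c by rw [h]; exact hFv, hc,
          show g' (u₀.1 + 1, u₀.2) = 0 by rw [h]; exact hg'v]
        abel
      · have hne1 : (u₀.1 + 1, u₀.2) ≠ v := by
          intro hh
          have e1 : u₀.1 + 1 = v.1 := (Prod.ext_iff.mp hh).1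
          have f1 : u₀.1 - 1 = v.1 := (Prod.ext_iff.mp h).1
          omega
        have hne3 : (u₀.1, u₀.2 + 1) ≠ v := by
          intro hh
          have e1 : u₀.1 = v.1 := (Prod.ext_iff.mp hh).1
          have f1 : u₀.1 - 1 = v.1 := (Prod.ext_iff.mp h).1
          omega
        have hne4 : (u₀.1, u₀.2 - 1) ≠ v := by
          intro hh
          have e1 : u₀.1 = v.1 := (Prod.ext_iff.mp hh).1
          have f1 : u₀.1 - 1 = v.1 := (Prod.ext_iff.mp h).1
          omega
        rw [hFp, hFne _ hne1, hFne _ hne3, hFne _ hne4,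
          show F (u₀.1 - 1, u₀.2) = c by rw [h]; exact hFv, hc,
          show g' (u₀.1 - 1, u₀.2) = 0 by rw [h]; exact hg'v]
        abel
      · have hne1 : (u₀.1 + 1, u₀.2) ≠ v := by
          intro hh
          have e1 : u₀.1 + 1 = v.1 := (Prod.ext_iff.mp hh).1
          have f1 : u₀.1 = v.1 := (Prod.ext_iff.mp h).1
          omega
        have hne2 : (u₀.1 - 1, u₀.2) ≠ v := by
          intro hh
          have e1 : u₀.1 - 1 = v.1 := (Prod.ext_iff.mp hh).1
          have f1 : u₀.1 = v.1 := (Prod.ext_iff.mp h).1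
          omega
        have hne4 : (u₀.1, u₀.2 - 1) ≠ v := by
          intro hh
          have e2 : u₀.2 - 1 = v.2 := (Prod.ext_iff.mp hh).2
          have f2 : u₀.2 + 1 = v.2 := (Prod.ext_iff.mp h).2
          omega
        rw [hFp, hFne _ hne1, hFne _ hne2, hFne _ hne4,
          show F (u₀.1, u₀.2 + 1) = c by rw [h]; exact hFv, hc,
          show g' (u₀.1, u₀.2 + 1) = 0 by rw [h]; exact hg'v]
        abel
      · have hne1 : (u₀.1 + 1, u₀.2) ≠ v := by
          intro hh
          have e1 : u₀.1 + 1 = v.1 := (Prod.ext_iff.mp hh).1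
          have f1 : u₀.1 = v.1 := (Prod.ext_iff.mp h).1
          omega
        have hne2 : (u₀.1 - 1, u₀.2) ≠ v := by
          intro hh
          have e1 : u₀.1 - 1 = v.1 := (Prod.ext_iff.mp hh).1
          have f1 : u₀.1 = v.1 := (Prod.ext_iff.mp h).1
          omega
        have hne3 : (u₀.1, u₀.2 + 1) ≠ v := by
          intro hh
          have e2 : u₀.2 + 1 = v.2 := (Prod.ext_iff.mp hh).2
          have f2 : u₀.2 - 1 = v.2 := (Prod.ext_iff.mp h).2
          omega
        rw [hFp, hFne _ hne1, hFne _ hne2, hFne _ hne3,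
          show F (u₀.1, u₀.2 - 1) = c by rw [h]; exact hFv, hc,
          show g' (u₀.1, u₀.2 - 1) = 0 by rw [h]; exact hg'v]
        abel
  · push_neg at hex
    obtain ⟨F, hF⟩ : ∃ F : ℤ × ℤ → A, ∀ x, F x = if x = v then 0 else g' x :=
      ⟨_, fun x => rfl⟩
    have hFne : ∀ x, x ≠ v → F x = g' x := fun x hx => by rw [hF x, if_neg hx]
    have hFΓ : ∀ x (hx : x ∈ Γ), F x = g ⟨x, hx⟩ := fun x hx => by
      rw [hFne x (hne_v x hx), hg'eq x hx]
    refine ⟨fun x => F x.1, ?_, fun x => hFΓ x.1 x.2⟩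
    intro p hp
    have hpint : p ∈ latInterior Γ := hex p hp
    show (4 : ℤ) • F p = F (p.1 + 1, p.2) + F (p.1 - 1, p.2) +
      F (p.1, p.2 + 1) + F (p.1, p.2 - 1)
    rw [hFΓ p hpint.1, hFΓ _ hpint.2.1, hFΓ _ hpint.2.2.1,
      hFΓ _ hpint.2.2.2.1, hFΓ _ hpint.2.2.2.2]
    exact hg p hpint

/-- transport of harmonicity along set equality -/
lemma harmonic_congr {A : Type} [AddCommGroup A] {Γ Δ : Set (ℤ × ℤ)} (h : Γ = Δ)
    (f : Γ → A) (hf : IsHarmonicOn Γ f) :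
    IsHarmonicOn Δ (fun x => f ⟨x.1, h ▸ x.2⟩) := by
  subst h
  exact hf

lemma extend_surj {A : Type} [AddCommGroup A] :
    ∀ (n : ℕ) (Γ₁ Γ₂ : Set (ℤ × ℤ)) (hsub : Γ₁ ⊆ Γ₂) (hfin₂ : Γ₂.Finite)
      (hconv₁ : LatticeConvex Γ₁) (hconv₂ : LatticeConvex Γ₂)
      (hcard : hfin₂.toFinset.card ≤ n) (g : Γ₁ → A) (hg : IsHarmonicOn Γ₁ g),
      ∃ f : Γ₂ → A, IsHarmonicOn Γ₂ f ∧ ∀ x : Γ₁, f ⟨x.1, hsub x.2⟩ = g x := by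
  intro n
  induction n with
  | zero =>
    intro Γ₁ Γ₂ hsub hfin₂ hconv₁ hconv₂ hcard g hg
    have h2 : Γ₂ = ∅ := by
      have hc := Nat.le_zero.mp hcard
      rw [Finset.card_eq_zero, Set.Finite.toFinset_eq_empty] at hc
      exact hc
    have h1 : Γ₁ = Γ₂ := by
      rw [h2] at hsub ⊢
      exact Set.subset_empty_iff.mp hsub
    subst h1
    exact ⟨g, hg, fun x => rfl⟩
  | succ n ih =>
    intro Γ₁ Γ₂ hsub hfin₂ hconv₁ hconv₂ hcard g hg
    by_cases heq : Γ₁ = Γ₂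
    · subst heq
      exact ⟨g, hg, fun x => rfl⟩
    · have hne : (Γ₂ \ Γ₁).Nonempty := by
        rw [Set.diff_nonempty]
        intro h
        exact heq (Set.Subset.antisymm hsub h)
      obtain ⟨v, hv, hconv'⟩ := exists_removable Γ₁ Γ₂ hsub hfin₂ hconv₁ hconv₂ hne
      have hsub' : Γ₁ ⊆ Γ₂ \ {v} := by
        intro x hx
        refine ⟨hsub hx, ?_⟩
        intro h
        rw [Set.mem_singleton_iff] at h
        subst h
        exact hv.2 hx
      have hfin' : (Γ₂ \ {v}).Finite := hfin₂.subset Set.diff_subset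
      have hcard' : hfin'.toFinset.card ≤ n := by
        have hss : hfin'.toFinset ⊂ hfin₂.toFinset := by
          rw [Set.Finite.toFinset_ssubset_toFinset]
          exact ⟨Set.diff_subset, fun h => (h (hv.1)).2 rfl⟩
        have := Finset.card_lt_card hss
        omega
      obtain ⟨g', hg', hres'⟩ := ih Γ₁ (Γ₂ \ {v}) hsub' hfin' hconv₁ hconv' hcard' g hg
      have hvΓ' : v ∉ Γ₂ \ {v} := fun h => h.2 rfl
      have hmid' := fun a b c ha hb h1 h2 => latticeConvex_mid hconv' (a := a) (b := b) (c := c) ha hb h1 h2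
      obtain ⟨f, hf, hresf⟩ := extend_one hvΓ' hmid' g' hg'
      have hins : insert v (Γ₂ \ {v}) = Γ₂ := by
        rw [Set.insert_diff_singleton, Set.insert_eq_of_mem hv.1]
      refine ⟨_, harmonic_congr hins f hf, ?_⟩
      intro x
      exact (hresf ⟨x.1, hsub' x.2⟩).trans (hres' x)

/-- Lemma 2: for finite convex `Γ₁ ⊆ Γ₂ ⊆ ℤ²` and any abelian group `A`, the
restriction map `H_A(Γ₂) → H_A(Γ₁)` is well defined (restrictions of harmonic
functions are harmonic) and surjective. -/
theorem restriction_of_harmonic_wellDefined_and_surjective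
    (A : Type) [AddCommGroup A] (Γ₁ Γ₂ : Set (ℤ × ℤ)) (hsub : Γ₁ ⊆ Γ₂)
    (hfin₁ : Γ₁.Finite) (hfin₂ : Γ₂.Finite)
    (hconv₁ : LatticeConvex Γ₁) (hconv₂ : LatticeConvex Γ₂) :
    (∀ f : Γ₂ → A, IsHarmonicOn Γ₂ f →
      IsHarmonicOn Γ₁ (fun v : Γ₁ => f ⟨v.1, hsub v.2⟩)) ∧
    (∀ g : Γ₁ → A, IsHarmonicOn Γ₁ g →
      ∃ f : Γ₂ → A, IsHarmonicOn Γ₂ f ∧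
        (fun v : Γ₁ => f ⟨v.1, hsub v.2⟩) = g) := by
  constructor
  · intro f hf p hp
    have hp' : p ∈ latInterior Γ₂ :=
      ⟨hsub hp.1, hsub hp.2.1, hsub hp.2.2.1, hsub hp.2.2.2.1, hsub hp.2.2.2.2⟩
    exact hf p hp'
  · intro g hg
    obtain ⟨f, hf, hres⟩ := extend_surj hfin₂.toFinset.card Γ₁ Γ₂ hsub hfin₂
      hconv₁ hconv₂ (le_refl _) g hg
    exact ⟨f, hf, funext fun x => hres x⟩

end
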